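/- For every n ≥ 1, the positive lattice (ℤ^n, A_n) is of E-type: for every positive lattice (L',φ'), every minimal vector of the tensor product form A_n ⊗ φ' on ℤ^n ⊗_ℤ L' is a simple tensor u ⊗ v with u ∈ ℤ^n and v ∈ L'. -/

import Mathlib

open scoped TensorProduct

/-- The symmetric bilinear form of `A_n(x) = Σ_{1 ≤ i ≤ j ≤ n} x_i x_j` on `ℤⁿ`
(so `BAn n x x = A_n(x)`). -/
def BAn (n : ℕ) (x y : Fin n → ℤ) : ℚ :=
  (((∑ i, x i * y i) + (∑ i, x i) * (∑ i, y i) : ℤ) : ℚ) / 2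

lemma BAn_single (n : ℕ) (i j : Fin n) :
    BAn n (Pi.single i 1) (Pi.single j 1) = ((if i = j then 1 else 0) + 1) / 2 := by
  simp [BAn, Pi.single_apply, Finset.sum_ite_eq', mul_ite, ite_mul, eq_comm]

lemma exists_rep {L' : Type*} [AddCommGroup L'] [Module ℤ L'] {n : ℕ}
    (t : (Fin n → ℤ) ⊗[ℤ] L') :
    ∃ v : Fin n → L', t = ∑ i, Pi.single i (1:ℤ) ⊗ₜ[ℤ] v i := by
  induction t using TensorProduct.induction_on with
  | zero => exact ⟨0, by simp⟩
  | tmul x w =>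
    refine ⟨fun i => x i • w, ?_⟩
    have h1 : ∀ i : Fin n, Pi.single i (1:ℤ) ⊗ₜ[ℤ] (x i • w)
        = (x i • (Pi.single i 1 : Fin n → ℤ)) ⊗ₜ[ℤ] w := by
      intro i; rw [← int_smul_eq_zsmul (inferInstance : Module ℤ L') (x i) w]
      exact ((TensorProduct.mk ℤ (Fin n → ℤ) L' (Pi.single i 1)).map_smul (x i) w).trans
        (TensorProduct.smul_tmul' _ _ _)
    have h2 : x = ∑ i, x i • (Pi.single i 1 : Fin n → ℤ) := by
      funext j; simp [Pi.single_apply]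
    rw [Finset.sum_congr rfl (fun i _ => h1 i), ← TensorProduct.sum_tmul, ← h2]
  | add a b ha hb =>
    obtain ⟨va, rfl⟩ := ha; obtain ⟨vb, rfl⟩ := hb
    exact ⟨va + vb, by simp [TensorProduct.tmul_add, Finset.sum_add_distrib]⟩

theorem An_is_EType
    (n : ℕ) (hn : 1 ≤ n)
    (L' : Type*) [AddCommGroup L'] [Module ℤ L'] [Module.Free ℤ L'] [Module.Finite ℤ L']
    (B' : L' →ₗ[ℤ] L' →ₗ[ℤ] ℚ) (hB'symm : ∀ x y, B' x y = B' y x)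
    (hB'pos : ∀ x : L', x ≠ 0 → 0 < B' x x)
    (S : ((Fin n → ℤ) ⊗[ℤ] L') →ₗ[ℤ] ((Fin n → ℤ) ⊗[ℤ] L') →ₗ[ℤ] ℚ)
    (hS : ∀ (x : Fin n → ℤ) (v : L') (x' : Fin n → ℤ) (v' : L'),
      S (x ⊗ₜ[ℤ] v) (x' ⊗ₜ[ℤ] v') = BAn n x x' * B' v v')
    (t : (Fin n → ℤ) ⊗[ℤ] L') (ht : t ≠ 0)
    (hmin : ∀ s : (Fin n → ℤ) ⊗[ℤ] L', s ≠ 0 → S t t ≤ S s s) :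
    ∃ (u : Fin n → ℤ) (v : L'), t = u ⊗ₜ[ℤ] v := by
  obtain ⟨v, hrep⟩ := exists_rep t
  have hnonneg : ∀ w : L', 0 ≤ B' w w := by
    intro w
    rcases eq_or_ne w 0 with rfl | h
    · simp
    · exact le_of_lt (hB'pos w h)
  -- the key formula for S t t
  have hst : S t t = ∑ i, ∑ j, (((if i = j then (1:ℚ) else 0) + 1) / 2) * B' (v i) (v j) := by
    conv_lhs => rw [hrep]
    simp only [map_sum, LinearMap.sum_apply, hS, BAn_single]
    exact Finset.sum_comm
  have key : 2 * S t t = (∑ i, B' (v i) (v i)) + B' (∑ i, v i) (∑ i, v i) := by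
    have hsplit : ∀ i j : Fin n,
        2 * ((((if i = j then (1:ℚ) else 0) + 1) / 2) * B' (v i) (v j))
          = (if i = j then B' (v i) (v j) else 0) + B' (v i) (v j) := by
      intro i j; split <;> ring
    rw [hst, Finset.mul_sum]
    simp only [Finset.mul_sum, hsplit, Finset.sum_add_distrib, Finset.sum_ite_eq,
      Finset.mem_univ, if_true, map_sum, LinearMap.sum_apply]
    congr 1
    exact Finset.sum_comm
  -- minimality gives a lower bound on values of B' at nonzero vectors
  have hle : ∀ w : L', w ≠ 0 → S t t ≤ B' w w := by
    intro w hw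
    have h0n : (0:ℕ) < n := hn
    set e0 : Fin n → ℤ := Pi.single (⟨0, h0n⟩ : Fin n) 1 with he0
    have hsv : S (e0 ⊗ₜ[ℤ] w) (e0 ⊗ₜ[ℤ] w) = B' w w := by
      rw [hS, he0, BAn_single]; simp
    have hne : e0 ⊗ₜ[ℤ] w ≠ 0 := by
      intro h
      have h0 : S (e0 ⊗ₜ[ℤ] w) (e0 ⊗ₜ[ℤ] w) = 0 := by rw [h]; simp
      rw [hsv] at h0
      exact absurd h0 (ne_of_gt (hB'pos w hw))
    calc S t t ≤ S (e0 ⊗ₜ[ℤ] w) (e0 ⊗ₜ[ℤ] w) := hmin _ hne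
      _ = B' w w := hsv
  -- some coordinate is nonzero
  have hex : ∃ i, v i ≠ 0 := by
    by_contra h
    push_neg at h
    apply ht
    rw [hrep]
    exact Finset.sum_eq_zero fun i _ => by rw [h i, TensorProduct.tmul_zero]
  obtain ⟨i0, hi0⟩ := hex
  have hpos : 0 < S t t := by
    have h1 : B' (v i0) (v i0) ≤ ∑ i, B' (v i) (v i) :=
      Finset.single_le_sum (fun i _ => hnonneg _) (Finset.mem_univ i0)
    have h2 := hB'pos _ hi0
    have h3 := hnonneg (∑ i, v i)
    linarith
  by_cases hone : ∀ j, j ≠ i0 → v j = 0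
  · -- only one nonzero coordinate: simple tensor
    refine ⟨Pi.single i0 1, v i0, ?_⟩
    rw [hrep]
    exact Finset.sum_eq_single i0
      (fun j _ hj => by rw [hone j hj, TensorProduct.tmul_zero]) (by simp)
  · push_neg at hone
    obtain ⟨j, hji0, hj⟩ := hone
    have hvi0 := hle _ hi0
    have hvj := hle _ hj
    have hij : i0 ≠ j := fun h => hji0 h.symm
    have hpair : B' (v i0) (v i0) + B' (v j) (v j) ≤ ∑ i, B' (v i) (v i) := by
      calc B' (v i0) (v i0) + B' (v j) (v j)
          = ∑ i ∈ ({i0, j} : Finset (Fin n)), B' (v i) (v i) := (Finset.sum_pair (f := fun i => B' (v i) (v i)) hij).symm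
        _ ≤ ∑ i, B' (v i) (v i) :=
            Finset.sum_le_sum_of_subset_of_nonneg (Finset.subset_univ _)
              (fun i _ _ => hnonneg _)
    have hsum0 : B' (∑ i, v i) (∑ i, v i) ≤ 0 := by linarith
    have hsum : ∑ i, v i = 0 := by
      by_contra h
      exact absurd (hB'pos _ h) (not_lt.mpr hsum0)
    have hrest : ∀ c, c ≠ i0 → c ≠ j → v c = 0 := by
      intro c hc1 hc2
      by_contra hc
      have hvc := hle _ hc
      have htrip : B' (v i0) (v i0) + B' (v j) (v j) + B' (v c) (v c)
          ≤ ∑ i, B' (v i) (v i) := by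
        have hsub : ({i0, j, c} : Finset (Fin n)).sum (fun i => B' (v i) (v i))
            = B' (v i0) (v i0) + B' (v j) (v j) + B' (v c) (v c) := by
          rw [Finset.sum_insert (by simp [hij, Ne.symm hc1]),
            Finset.sum_pair (Ne.symm hc2)]
          ring
        calc B' (v i0) (v i0) + B' (v j) (v j) + B' (v c) (v c)
            = ({i0, j, c} : Finset (Fin n)).sum (fun i => B' (v i) (v i)) := hsub.symm
          _ ≤ ∑ i, B' (v i) (v i) :=
              Finset.sum_le_sum_of_subset_of_nonneg (Finset.subset_univ _)
                (fun i _ _ => hnonneg _)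
      rw [hsum] at key
      simp only [map_zero, LinearMap.zero_apply, add_zero] at key
      linarith
    have hsum2 : ∑ i, v i = v i0 + v j := by
      have h1 : ∑ i ∈ ({i0, j} : Finset (Fin n)), v i = ∑ i, v i :=
        Finset.sum_subset (Finset.subset_univ _)
          (fun c _ hc => by
            simp only [Finset.mem_insert, Finset.mem_singleton, not_or] at hc
            exact hrest c hc.1 hc.2)
      rw [← h1, Finset.sum_pair hij]
    have hvj2 : v j = -v i0 := by
      have := hsum2.symm.trans hsum
      linear_combination (norm := abel) this
    refine ⟨Pi.single i0 1 - Pi.single j 1, v i0, ?_⟩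
    have hrep2 : t = Pi.single i0 (1:ℤ) ⊗ₜ[ℤ] v i0 + Pi.single j (1:ℤ) ⊗ₜ[ℤ] v j := by
      have h1 : ∑ i ∈ ({i0, j} : Finset (Fin n)), Pi.single i (1:ℤ) ⊗ₜ[ℤ] v i
          = ∑ i, Pi.single i (1:ℤ) ⊗ₜ[ℤ] v i :=
        Finset.sum_subset (Finset.subset_univ _)
          (fun c _ hc => by
            simp only [Finset.mem_insert, Finset.mem_singleton, not_or] at hc
            rw [hrest c hc.1 hc.2, TensorProduct.tmul_zero])
      rw [hrep, ← h1, Finset.sum_pair hij]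
    rw [hrep2, hvj2, TensorProduct.tmul_neg, TensorProduct.sub_tmul]
    abel
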